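/- Let F, G be distribution functions with F continuous, α ∈ (0,1], dF* = α^{-1} G dF, C(z) = α^{-1} G(z)(1 − F(z)). Suppose ∫ dF/G < ∞. Then for any a with F(a) < 1, the double integral ∫_{(-∞,a]} (∫_{(-∞,x)} dF*(y)/C(y)^2) |φ(x)| (1 − F(x)) / C(x) dF*(x) is finite whenever φ is bounded on (-∞, a]. -/

import Mathlib

open MeasureTheory Set

/-- Under condition (A)(ii) `∫ dF/G < ∞`, for any `a` with `F(a) < 1` and `φ` bounded on
`(−∞, a]`, the double integral
`∫_{(-∞,a]} (∫_{(-∞,x)} dF*/C²) |φ(x)| (1−F(x))/C(x) dF*(x)` is finite. -/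
theorem double_integral_finite
    (μ : Measure ℝ) [IsProbabilityMeasure μ]
    (F G : ℝ → ℝ)
    (hF : ∀ x, F x = (μ (Iic x)).toReal) (hFcont : Continuous F)
    (hGmeas : Measurable G) (hG0 : ∀ y, 0 ≤ G y) (hG1 : ∀ y, G y ≤ 1)
    (hint : (∫⁻ y, ENNReal.ofReal (1 / G y) ∂μ) < ⊤)
    (α : ℝ) (hαpos : 0 < α) (hα1 : α ≤ 1)
    (C : ℝ → ℝ) (hC : ∀ z, C z = α⁻¹ * G z * (1 - F z))
    (Fstar : Measure ℝ)
    (hFstar : Fstar = μ.withDensity (fun z => ENNReal.ofReal (α⁻¹ * G z)))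
    (a : ℝ) (ha : F a < 1)
    (φ : ℝ → ℝ) (hφmeas : Measurable φ)
    (M : ℝ) (hφbd : ∀ x ∈ Iic a, |φ x| ≤ M) :
    (∫⁻ x in Iic a,
        (∫⁻ y in Iio x, ENNReal.ofReal (1 / C y ^ 2) ∂Fstar) *
          ENNReal.ofReal (|φ x| * (1 - F x) / C x) ∂Fstar) < ⊤ := by
  have hMnn : 0 ≤ M := le_trans (abs_nonneg _) (hφbd a (mem_Iic.mpr le_rfl))
  set c := 1 - F a with hcdef
  have hc : 0 < c := by simp only [hcdef]; linarith
  have hαinv : (0:ℝ) < α⁻¹ := inv_pos.mpr hαpos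
  have hFmono : Monotone F := by
    intro x y hxy
    rw [hF x, hF y]
    exact ENNReal.toReal_mono (measure_ne_top μ _) (measure_mono (Iic_subset_Iic.mpr hxy))
  have hγ : ∀ x, x ≤ a → c ≤ 1 - F x := by
    intro x hx
    have := hFmono hx
    simp only [hcdef]; linarith
  set d : ℝ → ENNReal := fun z => ENNReal.ofReal (α⁻¹ * G z) with hd
  have hdmeas : Measurable d := (measurable_const.mul hGmeas).ennreal_ofReal
  have hrw : ∀ s : Set ℝ, MeasurableSet s → ∀ f : ℝ → ENNReal,
      ∫⁻ x in s, f x ∂Fstar = ∫⁻ x in s, d x * f x ∂μ := by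
    intro s hs f
    rw [hFstar, restrict_withDensity hs,
      lintegral_withDensity_eq_lintegral_mul_non_measurable _ hdmeas
        (ae_of_all _ fun z => ENNReal.ofReal_lt_top)]
    rfl
  set K : ENNReal := ENNReal.ofReal (α / c ^ 2) * ∫⁻ y, ENNReal.ofReal (1 / G y) ∂μ with hK
  have hKtop : K < ⊤ := ENNReal.mul_lt_top ENNReal.ofReal_lt_top hint
  -- pointwise real inequality for inner integrand
  have hinnerpt : ∀ y, y ≤ a →
      α⁻¹ * G y * (1 / C y ^ 2) ≤ α / c ^ 2 * (1 / G y) := by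
    intro y hy
    rcases eq_or_lt_of_le (hG0 y) with hGy | hGy
    · rw [hC y, ← hGy]
      simp
    · have ht : c ≤ 1 - F y := hγ y hy
      have htpos : 0 < 1 - F y := lt_of_lt_of_le hc ht
      have hCeq : α⁻¹ * G y * (1 / C y ^ 2) = α / (G y * (1 - F y) ^ 2) := by
        rw [hC y]
        field_simp
      rw [hCeq]
      have hr : α / c ^ 2 * (1 / G y) = α / (G y * c ^ 2) := by
        rw [div_mul_div_comm, mul_one, mul_comm]
      rw [hr]
      apply div_le_div_of_nonneg_left (le_of_lt hαpos) (by positivity)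
      have : c ^ 2 ≤ (1 - F y) ^ 2 := by nlinarith
      nlinarith
  have hinner : ∀ x, x ≤ a →
      (∫⁻ y in Iio x, ENNReal.ofReal (1 / C y ^ 2) ∂Fstar) ≤ K := by
    intro x hx
    rw [hrw _ measurableSet_Iio _]
    calc ∫⁻ y in Iio x, d y * ENNReal.ofReal (1 / C y ^ 2) ∂μ
        ≤ ∫⁻ y in Iio x, ENNReal.ofReal (α / c ^ 2) * ENNReal.ofReal (1 / G y) ∂μ := by
          apply setLIntegral_mono' measurableSet_Iio
          intro y hy
          rw [hd]
          rw [← ENNReal.ofReal_mul (mul_nonneg hαinv.le (hG0 y)),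
            ← ENNReal.ofReal_mul (by positivity)]
          exact ENNReal.ofReal_le_ofReal (hinnerpt y (le_of_lt (lt_of_lt_of_le hy hx)))
      _ = ENNReal.ofReal (α / c ^ 2) * ∫⁻ y in Iio x, ENNReal.ofReal (1 / G y) ∂μ :=
          lintegral_const_mul' _ _ ENNReal.ofReal_ne_top
      _ ≤ K := by
          rw [hK]
          exact mul_le_mul_right (lintegral_mono' Measure.restrict_le_self le_rfl) _
  -- pointwise real inequality for outer integrand
  have houterpt : ∀ x, x ≤ a →
      α⁻¹ * G x * (|φ x| * (1 - F x) / C x) ≤ M := by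
    intro x hx
    rcases eq_or_lt_of_le (hG0 x) with hGx | hGx
    · rw [hC x, ← hGx]
      simpa using hMnn
    · have htpos : 0 < 1 - F x := lt_of_lt_of_le hc (hγ x hx)
      have : α⁻¹ * G x * (|φ x| * (1 - F x) / C x) = |φ x| := by
        rw [hC x]
        field_simp
      rw [this]
      exact hφbd x hx
  rw [hrw _ measurableSet_Iic _]
  calc ∫⁻ x in Iic a, d x *
          ((∫⁻ y in Iio x, ENNReal.ofReal (1 / C y ^ 2) ∂Fstar) *
            ENNReal.ofReal (|φ x| * (1 - F x) / C x)) ∂μ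
      ≤ ∫⁻ _ in Iic a, K * ENNReal.ofReal M ∂μ := by
        apply setLIntegral_mono' measurableSet_Iic
        intro x hx
        have h2 : d x * ENNReal.ofReal (|φ x| * (1 - F x) / C x) ≤ ENNReal.ofReal M := by
          rw [hd, ← ENNReal.ofReal_mul (mul_nonneg hαinv.le (hG0 x))]
          exact ENNReal.ofReal_le_ofReal (houterpt x hx)
        calc d x * ((∫⁻ y in Iio x, ENNReal.ofReal (1 / C y ^ 2) ∂Fstar) *
                ENNReal.ofReal (|φ x| * (1 - F x) / C x))
            = (∫⁻ y in Iio x, ENNReal.ofReal (1 / C y ^ 2) ∂Fstar) *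
              (d x * ENNReal.ofReal (|φ x| * (1 - F x) / C x)) := by ring
          _ ≤ K * ENNReal.ofReal M := mul_le_mul' (hinner x hx) h2
    _ = K * ENNReal.ofReal M * μ (Iic a) := setLIntegral_const _ _
    _ < ⊤ := ENNReal.mul_lt_top
        (ENNReal.mul_lt_top hKtop ENNReal.ofReal_lt_top) (measure_lt_top μ _)
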